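/- For (M,N) = (2,2), the rational q,t-Catalan series satisfies (1−q)·c_{2,2}(q,t) = q + t − qt, which in particular is symmetric in q and t. -/

import Mathlib

/-- `Δ ⊆ ℕ` is `(2,2)`-invariant: `Δ + 2 ⊆ Δ` and cofinite. -/
def Inv22 (Δ : Set ℕ) : Prop := (∀ k ∈ Δ, k + 2 ∈ Δ) ∧ (Δᶜ).Finite

/-- `area(Δ)` is the number of gaps of `Δ`. -/
noncomputable def area (Δ : Set ℕ) : ℕ := (Δᶜ).ncard

/-- The `2`-generators of `Δ`. -/
def Ngen2 (Δ : Set ℕ) : Set ℕ := {a ∈ Δ | ∀ b ∈ Δ, b + 2 ≠ a}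

/-- `codinv(Δ)` for `(M,N) = (2,2)`. -/
noncomputable def codinv22 (Δ : Set ℕ) : ℕ :=
  ∑ᶠ a ∈ Ngen2 Δ, (Set.Ico a (a + 2) ∩ Δᶜ).ncard

/-- `dinv(Δ) = δ(2,2) - codinv(Δ) = 1 - codinv(Δ)`. -/
noncomputable def dinv22 (Δ : Set ℕ) : ℕ := 1 - codinv22 Δ

def Dset (j : ℕ) : Set ℕ := {n | n % 2 = 0 ∨ 2*j+1 ≤ n}

lemma Dcompl (j : ℕ) : (Dset j)ᶜ = (fun i => 2*i+1) '' Set.Iio j := by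
  ext n
  simp only [Dset, Set.mem_compl_iff, Set.mem_setOf_eq, not_or, not_le, Set.mem_image,
    Set.mem_Iio]
  constructor
  · rintro ⟨h1, h2⟩
    exact ⟨n / 2, by omega, by omega⟩
  · rintro ⟨i, hi, rfl⟩
    omega

lemma area_D (j : ℕ) : area (Dset j) = j := by
  rw [area, Dcompl]
  rw [Set.ncard_image_of_injective _ (fun a b h => by omega)]
  rw [← Finset.coe_Iio, Set.ncard_coe_finset, Nat.card_Iio]

lemma finite_Dcompl (j : ℕ) : ((Dset j)ᶜ).Finite := by
  rw [Dcompl]; exact (Set.finite_Iio j).image _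

lemma inv_D (j : ℕ) : Inv22 (Dset j) := by
  refine ⟨fun k hk => ?_, finite_Dcompl j⟩
  rcases hk with h | h
  · left; omega
  · right; omega

lemma zero_mem_D (j : ℕ) : 0 ∈ Dset j := Or.inl rfl

lemma down_eq_Iio (S : Set ℕ) (hf : S.Finite) (hd : ∀ i ∈ S, ∀ j ≤ i, j ∈ S) :
    S = Set.Iio S.ncard := by
  ext m
  constructor
  · intro hm
    have h1 : Set.Iic m ⊆ S := fun x hx => hd m hm x hx
    have : (Set.Iic m).ncard ≤ S.ncard := Set.ncard_le_ncard h1 hf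
    have h2 : (Set.Iic m).ncard = m + 1 := by
      rw [← Finset.coe_Iic, Set.ncard_coe_finset, Nat.card_Iic]
    simp only [Set.mem_Iio]
    omega
  · intro hm
    by_contra h
    have hsub : S ⊆ Set.Iio m := by
      intro x hx
      simp only [Set.mem_Iio]
      by_contra hx2
      exact h (hd x hx m (by omega))
    have : S.ncard ≤ (Set.Iio m).ncard := Set.ncard_le_ncard hsub (Set.finite_Iio m)
    have h3 : (Set.Iio m).ncard = m := by
      rw [← Finset.coe_Iio, Set.ncard_coe_finset, Nat.card_Iio]
    simp only [Set.mem_Iio] at hm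
    omega

lemma classify (Δ : Set ℕ) (h : Inv22 Δ) (h0 : 0 ∈ Δ) : Δ = Dset (area Δ) := by
  obtain ⟨hstep, hfin⟩ := h
  -- evens in Δ
  have heven : ∀ i : ℕ, 2 * i ∈ Δ := by
    intro i
    induction i with
    | zero => exact h0
    | succ n ih =>
      have := hstep _ ih
      rwa [show 2 * n + 2 = 2 * (n + 1) by omega] at this
  -- gaps are odd
  have hodd : ∀ n ∈ Δᶜ, n % 2 = 1 := by
    intro n hn
    by_contra hp
    exact hn (by have := heven (n / 2); convert this using 1; omega)
  -- S = indices of odd gaps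
  set S : Set ℕ := {i | 2 * i + 1 ∉ Δ} with hS
  have himg : Δᶜ = (fun i => 2*i+1) '' S := by
    ext n
    simp only [Set.mem_image, Set.mem_compl_iff, hS, Set.mem_setOf_eq]
    constructor
    · intro hn
      have := hodd n hn
      exact ⟨n / 2, by rwa [show 2 * (n/2) + 1 = n by omega], by omega⟩
    · rintro ⟨i, hi, rfl⟩; exact hi
  have hSfin : S.Finite := by
    apply Set.Finite.subset (hfin.image (fun n => n / 2))
    intro i hi
    exact ⟨2*i+1, hi, by simp; omega⟩
  have hSdown : ∀ i ∈ S, ∀ j ≤ i, j ∈ S := by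
    intro i hi j hj
    by_contra hjS
    simp only [hS, Set.mem_setOf_eq, not_not] at hjS
    apply hi
    clear hi
    have : ∀ k, 2 * (j + k) + 1 ∈ Δ := by
      intro k
      induction k with
      | zero => simpa using hjS
      | succ n ih =>
        have := hstep _ ih
        rwa [show 2 * (j + n) + 1 + 2 = 2 * (j + (n+1)) + 1 by omega] at this
    have := this (i - j)
    rwa [show j + (i - j) = i by omega] at this
  have hScard : S.ncard = area Δ := by
    rw [area, himg, Set.ncard_image_of_injective _ (fun a b h => by omega)]
  have hSIio := down_eq_Iio S hSfin hSdown
  rw [hScard] at hSIio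
  ext n
  constructor
  · intro hn
    by_contra hD
    simp only [Dset, Set.mem_setOf_eq, not_or, not_le] at hD
    have : n ∈ Δᶜ → False := fun h => h hn
    -- hSIio : S = Iio (area Δ). n ∈ Δ means (n-1)/2 ∉ S means (n-1)/2 ≥ area. But n < 2*area+1 gives (n-1)/2 < area.
    have hn2 : (n - 1) / 2 ∉ S := by
      simp only [hS, Set.mem_setOf_eq, not_not]
      rwa [show 2 * ((n-1)/2) + 1 = n by omega]
    rw [hSIio] at hn2
    simp only [Set.mem_Iio, not_lt] at hn2
    omega
  · intro hn
    rcases hn with he | hge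
    · have := heven (n / 2); rwa [show 2 * (n/2) = n by omega] at this
    · by_contra hc
      have h1 : n % 2 = 1 := hodd n hc
      have : (n - 1) / 2 ∈ S := by
        simp only [hS, Set.mem_setOf_eq]
        rwa [show 2 * ((n-1)/2) + 1 = n by omega]
      rw [hSIio] at this
      simp only [Set.mem_Iio] at this
      omega

lemma ngen_D0 : Ngen2 (Dset 0) = {0, 1} := by
  ext a
  simp only [Ngen2, Dset, Set.mem_setOf_eq, Set.mem_insert_iff, Set.mem_singleton_iff]
  constructor
  · rintro ⟨-, h⟩
    by_contra hc
    push_neg at hc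
    exact h (a - 2) (by omega) (by omega)
  · rintro (rfl | rfl)
    · exact ⟨Or.inl rfl, fun b _ => by omega⟩
    · exact ⟨Or.inr le_rfl, fun b _ => by omega⟩

lemma ngen_Dj (j : ℕ) (hj : 1 ≤ j) : Ngen2 (Dset j) = {0, 2*j+1} := by
  ext a
  simp only [Ngen2, Dset, Set.mem_setOf_eq, Set.mem_insert_iff, Set.mem_singleton_iff]
  constructor
  · rintro ⟨ha, h⟩
    by_contra hc
    push_neg at hc
    obtain ⟨h0, h1⟩ := hc
    rcases ha with he | hge
    · exact h (a - 2) (Or.inl (by omega)) (by omega)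
    · -- a ≥ 2j+1, a ≠ 2j+1 so a ≥ 2j+2
      rcases Nat.even_or_odd a with hpar | hpar
      · exact h (a - 2) (Or.inl (by rcases hpar with ⟨c, rfl⟩; omega)) (by omega)
      · exact h (a - 2) (Or.inr (by rcases hpar with ⟨c, rfl⟩; omega)) (by omega)
  · rintro (rfl | rfl)
    · exact ⟨Or.inl rfl, fun b hb => by omega⟩
    · refine ⟨Or.inr le_rfl, fun b hb => ?_⟩
      rcases hb with he | hge
      · omega
      · omega

lemma codinv_D0 : codinv22 (Dset 0) = 0 := by
  have hcomp : (Dset 0)ᶜ = ∅ := by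
    rw [Dcompl]
    have : Set.Iio 0 = (∅ : Set ℕ) := by ext x; simp
    simp [this]
  rw [codinv22, ngen_D0]
  rw [finsum_mem_pair (by omega : (0:ℕ) ≠ 1)]
  simp [hcomp]

lemma codinv_Dj (j : ℕ) (hj : 1 ≤ j) : codinv22 (Dset j) = 1 := by
  rw [codinv22, ngen_Dj j hj]
  rw [finsum_mem_pair (by omega : (0:ℕ) ≠ 2*j+1)]
  have h1 : Set.Ico 0 (0 + 2) ∩ (Dset j)ᶜ = {1} := by
    ext n
    simp only [Set.mem_inter_iff, Set.mem_Ico, Set.mem_compl_iff, Dset, Set.mem_setOf_eq,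
      not_or, not_le, Set.mem_singleton_iff]
    omega
  have h2 : Set.Ico (2*j+1) (2*j+1 + 2) ∩ (Dset j)ᶜ = ∅ := by
    ext n
    simp only [Set.mem_inter_iff, Set.mem_Ico, Set.mem_compl_iff, Dset, Set.mem_setOf_eq,
      not_or, not_le, Set.mem_empty_iff_false, iff_false]
    omega
  rw [h1, h2]
  simp

lemma dinv_D (j : ℕ) : dinv22 (Dset j) = if j = 0 then 1 else 0 := by
  rcases Nat.eq_zero_or_pos j with rfl | hj
  · simp [dinv22, codinv_D0]
  · rw [dinv22, codinv_Dj j hj, if_neg (by omega : j ≠ 0)]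

lemma set_eq (k : ℕ) : {Δ : Set ℕ | Inv22 Δ ∧ 0 ∈ Δ ∧ area Δ = k} = {Dset k} := by
  ext Δ
  simp only [Set.mem_setOf_eq, Set.mem_singleton_iff]
  constructor
  · rintro ⟨h1, h2, h3⟩
    rw [classify Δ h1 h2, h3]
  · rintro rfl
    exact ⟨inv_D k, zero_mem_D k, area_D k⟩


open PowerSeries in
/-- The rational `q,t`-Catalan series
`c_{2,2}(q,t) = ∑ q^{area Δ} t^{dinv Δ}` over `(2,2)`-invariant subsets containing `0`. -/
noncomputable def c22 : PowerSeries (Polynomial ℤ) :=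
  PowerSeries.mk fun k =>
    ∑ᶠ Δ ∈ {Δ : Set ℕ | Inv22 Δ ∧ 0 ∈ Δ ∧ area Δ = k},
      (Polynomial.X : Polynomial ℤ) ^ dinv22 Δ

open PowerSeries in
lemma coeff_c22 (k : ℕ) :
    (coeff k) c22 = if k = 0 then Polynomial.X else 1 := by
  rw [c22, coeff_mk, set_eq k, finsum_mem_singleton, dinv_D]
  rcases Nat.eq_zero_or_pos k with rfl | hk
  · simp
  · simp [(by omega : k ≠ 0)]


open PowerSeries in
/-- `(1-q) c_{2,2}(q,t) = q + t - qt`, which is symmetric in `q` and `t`. -/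
theorem stmt17 :
    ((1 : PowerSeries (Polynomial ℤ)) - X) * c22
      = X + C (Polynomial.X : Polynomial ℤ) - X * C (Polynomial.X : Polynomial ℤ) := by
  ext n : 1
  rw [sub_mul, one_mul]
  simp only [map_sub, map_add]
  match n with
  | 0 =>
    simp [coeff_c22, coeff_zero_eq_constantCoeff, map_mul]
  | 1 =>
    simp [coeff_c22, PowerSeries.coeff_succ_X_mul, PowerSeries.coeff_X, PowerSeries.coeff_C]
  | (n+2) =>
    simp [coeff_c22, PowerSeries.coeff_succ_X_mul, PowerSeries.coeff_X, PowerSeries.coeff_C]
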